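/- Let k be an algebraically closed field and V a finite-dimensional k-vector space. Given two flags Fℓ and Fℓ' in V (i.e., two families of linear subspaces of V, each totally ordered by inclusion), there exists a decomposition V = L₁ ⊕ ⋯ ⊕ L_r with each Lᵢ a one-dimensional subspace, such that every subspace belonging to Fℓ or to Fℓ' is the (internal) direct sum of some of the Lᵢ. Equivalently, there is a basis e₁, …, e_r of V such that every subspace occurring in either flag is spanned by a subset of {e₁, …, e_r}. -/

import Mathlib

open Submodule Module

-- chains of submodules are finite
lemma chain_finite {k V : Type*} [Field k] [AddCommGroup V] [Module k V]
    [FiniteDimensional k V] {F : Set (Submodule k V)} (hF : IsChain (· ≤ ·) F) :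
    F.Finite := by
  apply Set.Finite.of_finite_image (f := fun W : Submodule k V => finrank k W)
  · exact (Set.finite_Iic (finrank k V)).subset (by
      rintro _ ⟨W, hW, rfl⟩
      exact Submodule.finrank_le W)
  · intro W₁ h₁ W₂ h₂ h
    rcases eq_or_ne W₁ W₂ with he | hne
    · exact he
    rcases hF h₁ h₂ hne with hle | hle
    · exact Submodule.eq_of_le_of_finrank_le hle h.ge
    · exact (Submodule.eq_of_le_of_finrank_le hle h.le).symm

-- least element facts
lemma chain_exists_least {k V : Type*} [Field k] [AddCommGroup V] [Module k V]
    [FiniteDimensional k V] {F : Set (Submodule k V)} (hF : IsChain (· ≤ ·) F)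
    (hne : F.Nonempty) : ∃ A ∈ F, ∀ W ∈ F, A ≤ W := by
  obtain ⟨A, hA, hmin⟩ := Set.Finite.exists_minimalFor id F (chain_finite hF) hne
  refine ⟨A, hA, fun W hW => ?_⟩
  rcases eq_or_ne A W with rfl | hne'
  · exact le_rfl
  rcases hF hA hW hne' with h | h
  · exact h
  · have : W = A := le_antisymm h (hmin hW h)
    exact this ▸ le_rfl

lemma aux_flags {k : Type*} [Field k] :
    ∀ (n : ℕ) (V : Type*) [AddCommGroup V] [Module k V] [FiniteDimensional k V],
      Module.finrank k V = n →
      ∀ F F' : Set (Submodule k V), IsChain (· ≤ ·) F → IsChain (· ≤ ·) F' →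
      ∃ b : Basis (Fin n) k V, ∀ W ∈ F ∪ F', ∃ S : Set (Fin n),
        W = Submodule.span k (⇑b '' S) := by
  intro n
  induction n with
  | zero =>
    intro V _ _ _ hr F F' hF hF'
    have hsub : Subsingleton V := by
      rw [← Module.finrank_zero_iff (R := k)] at *; omega
    refine ⟨Basis.empty V, fun W _ => ⟨∅, ?_⟩⟩
    simp only [Set.image_empty, Submodule.span_empty]
    exact Subsingleton.elim W ⊥
  | succ n ih =>
    intro V _ _ _ hr F F' hF hF'
    have hnt : Nontrivial V := by
      rw [← Module.finrank_pos_iff (R := k)]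
      omega
    -- A : least nonzero element of F (or ⊤)
    obtain ⟨A, hA0, hAle⟩ : ∃ A : Submodule k V, A ≠ ⊥ ∧ ∀ W ∈ F, W ≠ ⊥ → A ≤ W := by
      by_cases h : ({W ∈ F | W ≠ ⊥}).Nonempty
      · obtain ⟨A, ⟨hAF, hA0⟩, hle⟩ :=
          chain_exists_least (hF.mono (Set.sep_subset _ _)) h
        exact ⟨A, hA0, fun W hW hW0 => hle W ⟨hW, hW0⟩⟩
      · rw [Set.not_nonempty_iff_eq_empty, Set.eq_empty_iff_forall_notMem] at h
        exact ⟨⊤, bot_ne_top.symm, fun W hW hW0 =>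
          absurd (Set.mem_sep_iff.mpr ⟨hW, hW0⟩) (h W)⟩
    -- B : least element of F' meeting A (or ⊤)
    obtain ⟨B, hB0, hBle⟩ : ∃ B : Submodule k V, A ⊓ B ≠ ⊥ ∧
        ∀ W ∈ F', A ⊓ W ≠ ⊥ → B ≤ W := by
      by_cases h : ({W ∈ F' | A ⊓ W ≠ ⊥}).Nonempty
      · obtain ⟨B, ⟨hBF, hB0⟩, hle⟩ :=
          chain_exists_least (hF'.mono (Set.sep_subset _ _)) h
        exact ⟨B, hB0, fun W hW hW0 => hle W ⟨hW, hW0⟩⟩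
      · rw [Set.not_nonempty_iff_eq_empty, Set.eq_empty_iff_forall_notMem] at h
        exact ⟨⊤, by simpa using hA0, fun W hW hW0 =>
          absurd (Set.mem_sep_iff.mpr ⟨hW, hW0⟩) (h W)⟩
    obtain ⟨v₀, hv₀AB, hv₀⟩ := Submodule.exists_mem_ne_zero_of_ne_bot hB0
    set L : Submodule k V := Submodule.span k {v₀} with hLdef
    have hLAB : L ≤ A ⊓ B := by
      rw [hLdef, Submodule.span_le, Set.singleton_subset_iff]; exact hv₀AB
    have hLA : L ≤ A := hLAB.trans inf_le_left
    have hLB : L ≤ B := hLAB.trans inf_le_right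
    have key1 : ∀ W ∈ F, W ≠ ⊥ → L ≤ W := fun W hW h0 => hLA.trans (hAle W hW h0)
    have key2 : ∀ W ∈ F', ¬ L ≤ W → A ⊓ W = ⊥ := by
      intro W hW h
      by_contra h0
      exact h (hLB.trans (hBle W hW h0))
    set M : Submodule k V := sSup {W ∈ F' | ¬ L ≤ W} with hMdef
    have hWM : ∀ W ∈ F', ¬ L ≤ W → W ≤ M := fun W hW h => le_sSup ⟨hW, h⟩
    have hML : M ⊓ L = ⊥ := by
      rw [eq_bot_iff]
      intro x hx
      have hxM : x ∈ M := (Submodule.mem_inf.mp hx).1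
      have hxL : x ∈ L := (Submodule.mem_inf.mp hx).2
      by_cases hC : ({W ∈ F' | ¬ L ≤ W}).Nonempty
      · rw [hMdef, Submodule.mem_sSup_of_directed hC
          ((hF'.mono (Set.sep_subset _ _)).directedOn)] at hxM
        obtain ⟨W, ⟨hWF', hWL⟩, hxW⟩ := hxM
        have : x ∈ A ⊓ W := ⟨hLA hxL, hxW⟩
        rw [key2 W hWF' hWL] at this
        exact this
      · rw [Set.not_nonempty_iff_eq_empty] at hC
        rw [hMdef, hC, sSup_empty] at hxM
        exact hxM
    -- quotient
    set π : V →ₗ[k] V ⧸ L := L.mkQ with hπdef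
    have hπv₀ : π v₀ = 0 := by
      rw [hπdef, Submodule.mkQ_apply, Submodule.Quotient.mk_eq_zero]
      exact Submodule.mem_span_singleton_self v₀
    have hrQ : Module.finrank k (V ⧸ L) = n := by
      have h1 := Submodule.finrank_quotient_add_finrank L
      have h2 : Module.finrank k L = 1 := finrank_span_singleton hv₀
      omega
    obtain ⟨b, hb⟩ := ih (V ⧸ L) hrQ (Submodule.map π '' F) (Submodule.map π '' F')
      (hF.image_of_map_rel _ _ _ fun _ _ h => Submodule.map_mono h)
      (hF'.image_of_map_rel _ _ _ fun _ _ h => Submodule.map_mono h)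
    -- lifts
    have hg : ∀ i : Fin n, ∃ x : V, π x = b i ∧ (b i ∈ Submodule.map π M → x ∈ M) := by
      intro i
      by_cases h : b i ∈ Submodule.map π M
      · obtain ⟨x, hxM, hx⟩ := h
        exact ⟨x, hx, fun _ => hxM⟩
      · obtain ⟨x, hx⟩ := Submodule.mkQ_surjective L (b i)
        exact ⟨x, hx, fun hc => absurd hc h⟩
    choose g hgπ hgM using hg
    set f : Fin (n + 1) → V := Fin.snoc g v₀ with hfdef
    have hfc : ∀ i : Fin n, f i.castSucc = g i := fun i => by simp [hfdef]
    have hfl : f (Fin.last n) = v₀ := by simp [hfdef]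
    have hli : LinearIndependent k f := by
      rw [Fintype.linearIndependent_iff]
      intro c hc
      rw [Fin.sum_univ_castSucc] at hc
      have hπ0 : ∑ i : Fin n, c i.castSucc • b i = 0 := by
        have h2 := congrArg π hc
        simp only [map_add, map_sum, map_smul, map_zero, hfc, hfl, hgπ, hπv₀,
          smul_zero, add_zero] at h2
        exact h2
      have hz : ∀ i : Fin n, c i.castSucc = 0 :=
        Fintype.linearIndependent_iff.mp b.linearIndependent _ hπ0
      have hcl : c (Fin.last n) = 0 := by
        have : c (Fin.last n) • v₀ = 0 := by
          rw [hfl] at hc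
          have : (∑ i : Fin n, c i.castSucc • f i.castSucc) = 0 := by
            simp [hz]
          rw [this, zero_add] at hc
          exact hc
        rcases smul_eq_zero.mp this with h | h
        · exact h
        · exact absurd h hv₀
      intro i
      exact Fin.lastCases (motive := fun i => c i = 0) hcl hz i
    have hsp : ⊤ ≤ Submodule.span k (Set.range f) := by
      intro x _
      have hrepr : π x = ∑ i, b.repr (π x) i • b i := (b.sum_repr (π x)).symm
      set y := ∑ i, b.repr (π x) i • g i with hy
      have hπy : π y = π x := by
        rw [hrepr, hy, map_sum]
        simp only [map_smul, hgπ]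
      have hxy : x - y ∈ L := by
        have h0 : π (x - y) = 0 := by rw [map_sub, hπy, sub_self]
        rw [← L.ker_mkQ]
        exact LinearMap.mem_ker.mpr h0
      obtain ⟨a, ha⟩ := Submodule.mem_span_singleton.mp hxy
      have hxeq : x = y + a • v₀ := by rw [ha]; abel
      rw [hxeq]
      refine add_mem (Submodule.sum_mem _ fun i _ => Submodule.smul_mem _ _
        (Submodule.subset_span ⟨i.castSucc, hfc i⟩)) (Submodule.smul_mem _ _
        (Submodule.subset_span ⟨Fin.last n, hfl⟩))
    set b' : Basis (Fin (n + 1)) k V := Basis.mk hli hsp with hb'def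
    have hb'f : ⇑b' = f := Basis.coe_mk hli hsp
    refine ⟨b', fun W hW => ?_⟩
    obtain ⟨S₀, hS₀⟩ : ∃ S₀ : Set (Fin n), Submodule.map π W = Submodule.span k (⇑b '' S₀) := by
      rcases hW with h | h
      · exact hb _ (Or.inl (Set.mem_image_of_mem _ h))
      · exact hb _ (Or.inr (Set.mem_image_of_mem _ h))
    have hmapspan : Submodule.map π (Submodule.span k (g '' S₀)) = Submodule.span k (⇑b '' S₀) := by
      rw [Submodule.map_span]
      congr 1
      rw [← Set.image_comp]
      exact Set.image_congr fun i _ => hgπ i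
    have himc : f '' (Fin.castSucc '' S₀) = g '' S₀ := by
      rw [Set.image_image]
      exact Set.image_congr fun i _ => hfc i
    by_cases hLW : L ≤ W
    · refine ⟨Fin.castSucc '' S₀ ∪ {Fin.last n}, ?_⟩
      rw [hb'f, Set.image_union, himc, Set.image_singleton, hfl,
        Submodule.span_union]
      have h1 : Submodule.comap π (Submodule.map π W)
          = Submodule.comap π (Submodule.map π (Submodule.span k (g '' S₀))) := by
        rw [hmapspan, hS₀]
      rw [hπdef, Submodule.comap_map_mkQ, Submodule.comap_map_mkQ] at h1
      calc W = L ⊔ W := (sup_eq_right.mpr hLW).symm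
        _ = L ⊔ Submodule.span k (g '' S₀) := h1
        _ = Submodule.span k (g '' S₀) ⊔ Submodule.span k {v₀} := by
              rw [hLdef, sup_comm]
    · rcases hW with hWF | hWF'
      · -- W ∈ F and ¬ L ≤ W : W = ⊥
        refine ⟨∅, ?_⟩
        have : W = ⊥ := by
          by_contra h0
          exact hLW (key1 W hWF h0)
        simp [this]
      · -- W ∈ F' and ¬ L ≤ W : W ≤ M
        have hWleM : W ≤ M := hWM W hWF' hLW
        have hgW : ∀ i ∈ S₀, g i ∈ W := by
          intro i hi
          have hbW : b i ∈ Submodule.map π W := by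
            rw [hS₀]
            exact Submodule.subset_span (Set.mem_image_of_mem _ hi)
          obtain ⟨w, hwW, hww⟩ := hbW
          have hbM : b i ∈ Submodule.map π M :=
            Submodule.map_mono hWleM ⟨w, hwW, hww⟩
          have hgMi := hgM i hbM
          have hker : g i - w ∈ L := by
            have h0 : π (g i - w) = 0 := by rw [map_sub, hgπ, hww, sub_self]
            rw [← L.ker_mkQ]
            exact LinearMap.mem_ker.mpr h0
          have : g i - w ∈ M ⊓ L := ⟨sub_mem hgMi (hWleM hwW), hker⟩
          rw [hML, Submodule.mem_bot, sub_eq_zero] at this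
          rw [this]
          exact hwW
        refine ⟨Fin.castSucc '' S₀, ?_⟩
        rw [hb'f, himc]
        have hspW : Submodule.span k (g '' S₀) ≤ W := by
          rw [Submodule.span_le]
          rintro _ ⟨i, hi, rfl⟩
          exact hgW i hi
        refine le_antisymm ?_ hspW
        intro x hxW
        have hπx : π x ∈ Submodule.map π (Submodule.span k (g '' S₀)) := by
          rw [hmapspan, ← hS₀]
          exact Submodule.mem_map_of_mem hxW
        obtain ⟨y, hy, hyx⟩ := hπx
        have hker : x - y ∈ L := by
          have h0 : π (x - y) = 0 := by rw [map_sub, hyx, sub_self]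
          rw [← L.ker_mkQ]
          exact LinearMap.mem_ker.mpr h0
        have : x - y ∈ M ⊓ L := ⟨sub_mem (hWleM hxW) (hWleM (hspW hy)), hker⟩
        rw [hML, Submodule.mem_bot, sub_eq_zero] at this
        rw [this]
        exact hy


/-- A flag in a vector space is a family of subspaces totally ordered by inclusion.
Given two flags `F` and `F'` in a finite-dimensional vector space `V` over an
algebraically closed field `k`, there is a basis of `V` such that every subspace
belonging to either flag is spanned by a subset of the basis vectors. -/
theorem flags_simultaneous_basis (k : Type*) [Field k] [IsAlgClosed k]
    (V : Type*) [AddCommGroup V] [Module k V] [FiniteDimensional k V]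
    (F F' : Set (Submodule k V))
    (hF : IsChain (· ≤ ·) F) (hF' : IsChain (· ≤ ·) F') :
    ∃ b : Basis (Fin (Module.finrank k V)) k V,
      ∀ W ∈ F ∪ F', ∃ S : Set (Fin (Module.finrank k V)),
        W = Submodule.span k (⇑b '' S) := by
  exact aux_flags (Module.finrank k V) V rfl F F' hF hF'
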